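/- Let H be a directed graph on N vertices admitting a spanning diverging tree (a weakly connected subgraph in which one root vertex has no incoming edge and every other vertex has exactly one incoming edge), and let T be an N×N matrix with T_{jk} > 0 whenever (j,k) ∈ E(H), T_{jk} = 0 for j ≠ k with (j,k) ∉ E(H), and T_{kk} = −Σ_{j≠k} T_{jk}. Then 0 is a simple eigenvalue of T and all other eigenvalues of T have strictly negative real part. -/

import Mathlib

open Real Set

/-- The dead zone of a coupling function: the set of points at which `g` is locally zero. -/
def DZ (g : ℝ → ℝ) : Set ℝ := {x | ∃ U : Set ℝ, IsOpen U ∧ x ∈ U ∧ ∀ y ∈ U, g y = 0}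

open Complex Polynomial Matrix


lemma reach_all {N : ℕ} {R : Fin N → Fin N → Prop} {r : Fin N}
    (hconn : ∀ v, Relation.ReflTransGen (fun x y => R x y ∨ R y x) r v)
    (hroot : ∀ j, ¬ R j r)
    (huniq : ∀ k, k ≠ r → ∃! j, R j k) :
    ∀ v, Relation.ReflTransGen R r v := by
  intro v
  induction hconn v with
  | refl => exact Relation.ReflTransGen.refl
  | @tail b c _ hedge ih =>
    rcases hedge with h1 | h1
    · exact ih.tail h1
    · have hbne : b ≠ r := by
        rintro rfl
        exact hroot c h1
      rcases ih.cases_tail with heq | ⟨d, hd, hdb⟩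
      · exact absurd heq hbne
      · obtain ⟨p, -, hup⟩ := huniq b hbne
        have h2 : d = p := hup d hdb
        have h3 : c = p := hup c h1
        rw [h2, ← h3] at hd
        exact hd

lemma avg_eq {ι : Type*} (s : Finset ι) (w : ι → ℝ) (y : ι → ℂ) (z : ℂ)
    (hw : ∀ j ∈ s, 0 ≤ w j) (hle : ∀ j ∈ s, ‖y j‖ ≤ ‖z‖)
    (hsum : ∑ j ∈ s, (w j : ℂ) * (y j - z) = 0) :
    ∀ j ∈ s, 0 < w j → y j = z := by
  have h0 : ∑ j ∈ s, w j * ((y j - z) * (starRingEnd ℂ) z).re = 0 := by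
    have h1 : (∑ j ∈ s, (w j : ℂ) * (y j - z)) * (starRingEnd ℂ) z = 0 := by
      rw [hsum, zero_mul]
    rw [Finset.sum_mul] at h1
    have h2 := congrArg Complex.re h1
    rw [Complex.re_sum] at h2
    simpa [mul_assoc, Complex.re_ofReal_mul] using h2
  have hterm : ∀ j ∈ s, w j * ((y j - z) * (starRingEnd ℂ) z).re ≤ 0 := by
    intro j hj
    apply mul_nonpos_of_nonneg_of_nonpos (hw j hj)
    have hre : ((y j) * (starRingEnd ℂ) z).re ≤ ‖z‖ ^ 2 := by
      calc ((y j) * (starRingEnd ℂ) z).re ≤ ‖(y j) * (starRingEnd ℂ) z‖ :=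
            Complex.re_le_norm _
        _ = ‖y j‖ * ‖z‖ := by rw [norm_mul, Complex.norm_conj]
        _ ≤ ‖z‖ * ‖z‖ :=
            mul_le_mul_of_nonneg_right (hle j hj) (norm_nonneg _)
        _ = ‖z‖ ^ 2 := (sq (‖z‖)).symm
    have hz : (z * (starRingEnd ℂ) z).re = ‖z‖ ^ 2 := by
      rw [Complex.mul_conj]
      rw [Complex.normSq_eq_norm_sq, Complex.ofReal_re]
    calc ((y j - z) * (starRingEnd ℂ) z).re
        = ((y j) * (starRingEnd ℂ) z).re - (z * (starRingEnd ℂ) z).re := by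
          rw [sub_mul, Complex.sub_re]
      _ ≤ 0 := by rw [hz]; linarith
  have hall := (Finset.sum_eq_zero_iff_of_nonpos hterm).mp h0
  intro j hj hwj
  have h2 : ((y j - z) * (starRingEnd ℂ) z).re = 0 := by
    have := hall j hj
    rcases mul_eq_zero.mp this with h | h
    · exact absurd h (ne_of_gt hwj)
    · exact h
  have h3 : ((y j).re - z.re) * z.re + ((y j).im - z.im) * z.im = 0 := by
    simpa [Complex.mul_re, Complex.sub_re, Complex.sub_im, Complex.conj_re, Complex.conj_im]
      using h2
  have h4 : (y j).re ^ 2 + (y j).im ^ 2 ≤ z.re ^ 2 + z.im ^ 2 := by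
    have h5 := pow_le_pow_left₀ (norm_nonneg (y j)) (hle j hj) 2
    rw [Complex.sq_norm, Complex.sq_norm, Complex.normSq_apply, Complex.normSq_apply] at h5
    nlinarith [h5]
  have h6 : ((y j).re - z.re) ^ 2 + ((y j).im - z.im) ^ 2 ≤ 0 := by nlinarith
  have h7 : (y j).re = z.re := by nlinarith [sq_nonneg ((y j).re - z.re), sq_nonneg ((y j).im - z.im)]
  have h8 : (y j).im = z.im := by nlinarith [sq_nonneg ((y j).re - z.re), sq_nonneg ((y j).im - z.im)]
  exact Complex.ext h7 h8

lemma const_zero {N : ℕ} (r : Fin N) (w : Fin N → Fin N → ℝ)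
    (hw : ∀ j k, j ≠ k → 0 ≤ w j k) (u : Fin N → ℝ) (d : ℝ)
    (h : ∀ k, ∑ j ∈ Finset.univ.erase k, w j k * (u j - u k) = d) : d = 0 := by
  have hne : (Finset.univ : Finset (Fin N)).Nonempty := ⟨r, Finset.mem_univ r⟩
  obtain ⟨i, -, hi⟩ := Finset.exists_mem_eq_sup' hne u
  obtain ⟨i', -, hi'⟩ := Finset.exists_mem_eq_inf' hne u
  have h1 : d ≤ 0 := by
    rw [← h i]
    apply Finset.sum_nonpos
    intro j hj
    apply mul_nonpos_of_nonneg_of_nonpos (hw j i (Finset.ne_of_mem_erase hj))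
    have : u j ≤ u i := hi ▸ Finset.le_sup' u (Finset.mem_univ j)
    linarith
  have h2 : 0 ≤ d := by
    rw [← h i']
    apply Finset.sum_nonneg
    intro j hj
    apply mul_nonneg (hw j i' (Finset.ne_of_mem_erase hj))
    have : u i' ≤ u j := hi' ▸ Finset.inf'_le u (Finset.mem_univ j)
    linarith
  linarith

lemma charpoly_transpose' {n : Type*} [DecidableEq n] [Fintype n] {R : Type*} [CommRing R]
    (M : Matrix n n R) : M.transpose.charpoly = M.charpoly := by
  rw [Matrix.charpoly, Matrix.charpoly, ← Matrix.det_transpose (Matrix.charmatrix Mᵀ)]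
  congr 1
  ext i j
  by_cases h : i = j
  · subst h; simp [Matrix.charmatrix_apply]
  · simp [Matrix.charmatrix_apply, Matrix.diagonal_apply, h, Ne.symm h]

lemma charpoly_eval' {n : Type*} [DecidableEq n] [Fintype n] (M : Matrix n n ℂ) (t : ℂ) :
    M.charpoly.eval t = (t • (1 : Matrix n n ℂ) - M).det := by
  rw [Matrix.charpoly, ← Polynomial.coe_evalRingHom, RingHom.map_det]
  congr 1
  ext i j
  by_cases h : i = j <;>
    simp [Matrix.charmatrix_apply, Matrix.diagonal_apply, h, Matrix.one_apply,
      Matrix.smul_apply, Matrix.sub_apply]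

/-- if H admits a spanning diverging tree and T is the associated negative
Laplacian with positive weights exactly on the edges of H, then 0 is a simple eigenvalue of T
and all other eigenvalues have negative real part. -/
theorem laplacian_simple_zero (N : ℕ) (H : Fin N → Fin N → Prop)
    (hloop : ∀ i, ¬ H i i)
    (htree : ∃ (R : Fin N → Fin N → Prop) (r : Fin N),
      (∀ j k, R j k → H j k) ∧
      (∀ v, Relation.ReflTransGen (fun x y => R x y ∨ R y x) r v) ∧
      (∀ j, ¬ R j r) ∧
      (∀ k, k ≠ r → ∃! j, R j k))
    (T : Matrix (Fin N) (Fin N) ℝ)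
    (hpos : ∀ j k, j ≠ k → (H j k → 0 < T j k) ∧ (¬ H j k → T j k = 0))
    (hdiag : ∀ k, T k k = -∑ j ∈ Finset.univ.erase k, T j k) :
    Polynomial.rootMultiplicity 0 (T.map (Complex.ofReal)).charpoly = 1 ∧
    ∀ lam : ℂ, (T.map (Complex.ofReal)).charpoly.IsRoot lam → lam ≠ 0 → lam.re < 0 := by
  classical
  obtain ⟨R, r, hR, hconn, hroot, huniq⟩ := htree
  have hne : (Finset.univ : Finset (Fin N)).Nonempty := ⟨r, Finset.mem_univ r⟩
  set A : Matrix (Fin N) (Fin N) ℂ := T.map Complex.ofReal with hA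
  set B : Matrix (Fin N) (Fin N) ℂ := Aᵀ with hB
  have hoff : ∀ j k, j ≠ k → 0 ≤ T j k := by
    intro j k h
    by_cases hH : H j k
    · exact le_of_lt ((hpos j k h).1 hH)
    · rw [(hpos j k h).2 hH]
  have hcol : ∀ k, ∑ j, T j k = 0 := by
    intro k
    rw [← Finset.add_sum_erase _ _ (Finset.mem_univ k), hdiag k]
    ring
  have hmv : ∀ (x : Fin N → ℂ) k, B.mulVec x k = ∑ j, (T j k : ℂ) * x j := by
    intro x k
    simp [Matrix.mulVec, dotProduct, hB, hA, Matrix.transpose_apply, Matrix.map_apply]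
  have hsum_erase : ∀ k, ∑ j ∈ Finset.univ.erase k, (T j k : ℂ) = -(T k k : ℂ) := by
    intro k
    rw [← Complex.ofReal_sum]
    rw [hdiag k]
    push_cast
    ring
  have hid : ∀ (x : Fin N → ℂ) k,
      ∑ j ∈ Finset.univ.erase k, (T j k : ℂ) * (x j - x k) = B.mulVec x k := by
    intro x k
    have e1 : ∑ j ∈ Finset.univ.erase k, (T j k : ℂ) * (x j - x k)
        = (∑ j ∈ Finset.univ.erase k, (T j k : ℂ) * x j)
          - (∑ j ∈ Finset.univ.erase k, (T j k : ℂ)) * x k := by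
      rw [Finset.sum_mul, ← Finset.sum_sub_distrib]
      exact Finset.sum_congr rfl fun j _ => by ring
    rw [e1, hsum_erase, Finset.sum_erase_eq_sub (Finset.mem_univ k), hmv x k]
    ring
  -- kernel of B is the constants
  have K1 : ∀ x : Fin N → ℂ, B.mulVec x = 0 → ∀ k, x k = x r := by
    intro x hx
    set y : Fin N → ℂ := fun k => x k - x r with hy
    have hyx : B.mulVec y = 0 := by
      funext k
      have e2 : B.mulVec y k = (∑ j, (T j k : ℂ) * x j) - (∑ j, (T j k : ℂ)) * x r := by
        rw [hmv, Finset.sum_mul, ← Finset.sum_sub_distrib]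
        exact Finset.sum_congr rfl fun j _ => by simp [hy]; ring
      have hz : (∑ j, (T j k : ℂ)) = 0 := by
        rw [← Complex.ofReal_sum, hcol k, Complex.ofReal_zero]
      have hx0 : ∑ j, (T j k : ℂ) * x j = 0 := by
        rw [← hmv x k, hx]
        rfl
      simp [e2, hz, hx0]
    obtain ⟨i, -, hi⟩ := Finset.exists_mem_eq_sup' hne (fun k => ‖y k‖)
    have hle : ∀ j, ‖y j‖ ≤ ‖y i‖ := fun j =>
      hi ▸ Finset.le_sup' (fun k => ‖y k‖) (Finset.mem_univ j)
    have key : ∀ v, Relation.ReflTransGen R r v →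
        ‖y v‖ = ‖y i‖ → y v = 0 := by
      intro v hv
      induction hv with
      | refl => intro _; simp [hy]
      | @tail b c _ hbc ih =>
        intro habs
        have hbc' : H b c := hR b c hbc
        have hbne : b ≠ c := fun h => hloop c (h ▸ hbc')
        have hw : 0 < T b c := (hpos b c hbne).1 hbc'
        have havg := avg_eq (Finset.univ.erase c) (fun j => T j c) y (y c)
          (fun j hj => hoff j c (Finset.ne_of_mem_erase hj))
          (fun j _ => by rw [habs]; exact hle j)
          (by rw [hid y c, hyx]; rfl)
        have hyb : y b = y c := havg b (Finset.mem_erase.mpr ⟨hbne, Finset.mem_univ b⟩) hw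
        have hb0 : y b = 0 := ih (by rw [hyb, habs])
        rw [← hyb]
        exact hb0
    have hi0 : y i = 0 := key i (reach_all hconn hroot huniq i) rfl
    intro k
    have h2 : ‖y k‖ ≤ 0 := by
      have := hle k
      rw [hi0] at this
      simpa using this
    have h3 : y k = 0 := by
      have := le_antisymm h2 (norm_nonneg _)
      simpa using this
    exact sub_eq_zero.mp h3
  -- constants are not in the range of B (except 0)
  have K2 : ∀ (x : Fin N → ℂ) (c : ℂ), B.mulVec x = (fun _ => c) → c = 0 := by
    intro x c hx
    have hre : c.re = 0 := by
      apply const_zero r (fun j k => T j k) hoff (fun k => (x k).re)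
      intro k
      have e3 := congrArg Complex.re (hid x k)
      rw [Complex.re_sum] at e3
      have e4 : B.mulVec x k = c := congrFun hx k
      rw [e4] at e3
      rw [← e3]
      exact Finset.sum_congr rfl fun j _ => by
        rw [Complex.re_ofReal_mul, Complex.sub_re]
    have him : c.im = 0 := by
      apply const_zero r (fun j k => T j k) hoff (fun k => (x k).im)
      intro k
      have e3 := congrArg Complex.im (hid x k)
      rw [Complex.im_sum] at e3
      have e4 : B.mulVec x k = c := congrFun hx k
      rw [e4] at e3
      rw [← e3]
      exact Finset.sum_congr rfl fun j _ => by
        rw [Complex.im_ofReal_mul, Complex.sub_im]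
    exact Complex.ext hre him
  have ker2 : ∀ x : Fin N → ℂ, B.mulVec (B.mulVec x) = 0 → B.mulVec x = 0 := by
    intro x hx
    have h2 : B.mulVec x = fun _ => B.mulVec x r := funext (K1 _ hx)
    have h3 : B.mulVec x r = 0 := K2 x _ h2
    rw [h2]
    funext k
    simpa using h3
  set φ : Module.End ℂ (Fin N → ℂ) := Matrix.toLin' B with hφ
  have hφapp : ∀ x, φ x = B.mulVec x := fun x => Matrix.toLin'_apply B x
  have kerpow : ∀ (k : ℕ) (x : Fin N → ℂ), (φ ^ k) x = 0 → x = 0 ∨ B.mulVec x = 0 := by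
    intro k
    induction k with
    | zero => intro x hx; left; simpa using hx
    | succ k ih =>
      intro x hx
      rw [pow_succ] at hx
      have hx' : (φ ^ k) (φ x) = 0 := by
        rw [← Module.End.mul_apply]
        exact hx
      rcases ih (φ x) hx' with h | h
      · right
        rw [← hφapp]
        exact h
      · right
        rw [hφapp] at h
        exact ker2 x h
  have hone : (fun _ => (1 : ℂ) : Fin N → ℂ) ≠ 0 := by
    intro h
    have := congrFun h r
    simp at this
  have hgen : φ.maxGenEigenspace 0 = Submodule.span ℂ {(fun _ => 1 : Fin N → ℂ)} := by
    apply le_antisymm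
    · intro x hx
      rw [Module.End.mem_maxGenEigenspace] at hx
      obtain ⟨k, hk⟩ := hx
      simp only [zero_smul, sub_zero] at hk
      rcases kerpow k x hk with h | h
      · simp [h]
      · have hc := K1 x h
        have hx' : x = (x r) • (fun _ => 1 : Fin N → ℂ) := by
          funext k
          simp [hc k]
        rw [hx']
        exact Submodule.smul_mem _ _ (Submodule.mem_span_singleton_self _)
    · rw [Submodule.span_le, Set.singleton_subset_iff, SetLike.mem_coe,
        Module.End.mem_maxGenEigenspace]
      refine ⟨1, ?_⟩
      simp only [zero_smul, sub_zero, pow_one]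
      rw [hφapp]
      funext k
      rw [hmv]
      simp only [mul_one]
      rw [← Complex.ofReal_sum, hcol k]
      simp
  have hfin : Module.finrank ℂ (φ.maxGenEigenspace 0) = 1 := by
    rw [hgen]
    exact finrank_span_singleton hone
  have hchar : A.charpoly = φ.charpoly := by
    rw [← LinearMap.charpoly_toMatrix φ (Pi.basisFun ℂ (Fin N)),
      LinearMap.toMatrix_eq_toMatrix', hφ, LinearMap.toMatrix'_toLin', hB]
    exact (charpoly_transpose' A).symm
  constructor
  · rw [Polynomial.rootMultiplicity_eq_natTrailingDegree', hchar,
      ← LinearMap.finrank_maxGenEigenspace_zero_eq]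
    exact hfin
  · intro lam hroot' hlam0
    have hdet : (lam • (1 : Matrix (Fin N) (Fin N) ℂ) - A).det = 0 := by
      rw [← charpoly_eval' A lam]
      exact hroot'
    have hdetB : (lam • (1 : Matrix (Fin N) (Fin N) ℂ) - B).det = 0 := by
      rw [← Matrix.det_transpose]
      have e5 : (lam • (1 : Matrix (Fin N) (Fin N) ℂ) - B)ᵀ
          = lam • (1 : Matrix (Fin N) (Fin N) ℂ) - A := by
        rw [Matrix.transpose_sub, Matrix.transpose_smul, Matrix.transpose_one, hB,
          Matrix.transpose_transpose]
      rw [e5]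
      exact hdet
    obtain ⟨v, hv0, hv⟩ := Matrix.exists_mulVec_eq_zero_iff.mpr hdetB
    have h1 : B.mulVec v = lam • v := by
      rw [Matrix.sub_mulVec] at hv
      have := sub_eq_zero.mp hv
      rw [Matrix.smul_mulVec, Matrix.one_mulVec] at this
      exact this.symm
    have heig : ∀ k, ∑ j, (T j k : ℂ) * v j = lam * v k := by
      intro k
      rw [← hmv, h1]
      simp
    obtain ⟨i, -, hi⟩ := Finset.exists_mem_eq_sup' hne (fun k => ‖v k‖)
    have hle : ∀ j, ‖v j‖ ≤ ‖v i‖ := fun j =>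
      hi ▸ Finset.le_sup' (fun k => ‖v k‖) (Finset.mem_univ j)
    have hvi : v i ≠ 0 := by
      intro h
      apply hv0
      funext k
      have := hle k
      rw [h] at this
      simp only [norm_zero] at this
      exact norm_eq_zero.mp (le_antisymm this (norm_nonneg _))
    have hrow : (lam - (T i i : ℂ)) * v i = ∑ j ∈ Finset.univ.erase i, (T j i : ℂ) * v j := by
      rw [Finset.sum_erase_eq_sub (Finset.mem_univ i), heig i]
      ring
    set ρ : ℝ := ∑ j ∈ Finset.univ.erase i, T j i with hρ
    have hρ0 : 0 ≤ ρ := Finset.sum_nonneg fun j hj => hoff j i (Finset.ne_of_mem_erase hj)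
    have hTii : T i i = -ρ := by rw [hdiag i]
    have habs : ‖lam - (T i i : ℂ)‖ * ‖v i‖ ≤ ρ * ‖v i‖ := by
      rw [← norm_mul, hrow]
      calc ‖∑ j ∈ Finset.univ.erase i, (T j i : ℂ) * v j‖
          ≤ ∑ j ∈ Finset.univ.erase i, ‖(T j i : ℂ) * v j‖ :=
            norm_sum_le _ _
        _ ≤ ∑ j ∈ Finset.univ.erase i, T j i * ‖v i‖ := by
            apply Finset.sum_le_sum
            intro j hj
            rw [norm_mul, Complex.norm_of_nonneg (hoff j i (Finset.ne_of_mem_erase hj))]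
            exact mul_le_mul_of_nonneg_left (hle j) (hoff j i (Finset.ne_of_mem_erase hj))
        _ = ρ * ‖v i‖ := by rw [← Finset.sum_mul]
    have hvipos : 0 < ‖v i‖ := norm_pos_iff.mpr hvi
    have habs2 : ‖lam + (ρ : ℂ)‖ ≤ ρ := by
      have h6 := le_of_mul_le_mul_right habs hvipos
      have e6 : lam - (T i i : ℂ) = lam + (ρ : ℂ) := by
        rw [hTii]
        push_cast
        ring
      rw [e6] at h6
      exact h6
    have h3 : (lam.re + ρ) ^ 2 + lam.im ^ 2 ≤ ρ ^ 2 := by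
      have h7 := pow_le_pow_left₀ (norm_nonneg _) habs2 2
      rw [Complex.sq_norm, Complex.normSq_apply] at h7
      simp only [Complex.add_re, Complex.add_im, Complex.ofReal_re, Complex.ofReal_im,
        add_zero] at h7
      nlinarith [h7]
    by_contra hge
    push_neg at hge
    have h5 : lam.re ^ 2 + lam.im ^ 2 ≤ 0 := by nlinarith [mul_nonneg hge hρ0]
    have hre0 : lam.re = 0 := by nlinarith [sq_nonneg lam.re, sq_nonneg lam.im]
    have him0 : lam.im = 0 := by nlinarith [sq_nonneg lam.re, sq_nonneg lam.im]
    exact hlam0 (Complex.ext hre0 him0)
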